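/- For every colorful bin packing instance in which all items have size 0, and every run of BaP on it, the number of bins used by BaP (which equals the final number k of pseudo-bins) satisfies k ≤ 2·LB_1 − 1 < 2·OPT. In other words, the absolute competitive ratio of BaP restricted to zero-size items is at most 2. -/

import Mathlib

/-- `cnt c i j g` is `C(i,j,g)`: the number of indices `i ≤ l ≤ j` with `c l = g`. -/
def cnt {γ : Type*} [DecidableEq γ] (c : ℕ → γ) (i j : ℕ) (g : γ) : ℕ :=
  ((Finset.Icc i j).filter fun l => c l = g).card

/-- A packing of the instance with `n` items, sizes `s` and colors `c` (items are indexed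
`1,…,n`) into bins `1,…,L`: each bin has total size at most `1`, and two items packed
consecutively into the same bin have different colors. -/
def IsPacking {γ : Type*} (n L : ℕ) (s : ℕ → ℝ) (c : ℕ → γ) (f : ℕ → ℕ) : Prop :=
  (∀ t, 1 ≤ t → t ≤ n → 1 ≤ f t ∧ f t ≤ L) ∧
  (∀ b, (∑ l ∈ (Finset.Icc 1 n).filter fun l => f l = b, s l) ≤ 1) ∧
  (∀ i j, 1 ≤ i → i < j → j ≤ n → f i = f j →
    (∀ l, i < l → l < j → f l ≠ f i) → c i ≠ c j)

/-- `OPTcost n s c` is the minimum number of bins over all packings of the instance. -/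
noncomputable def OPTcost {γ : Type*} (n : ℕ) (s : ℕ → ℝ) (c : ℕ → γ) : ℕ :=
  sInf {L | ∃ f, IsPacking n L s c f}

/-- A run of the algorithm Balanced-Pseudo (BaP) on an instance of `n` items with colors
`color 1, …, color n`.  `assign t` is the (1-based) index of the pseudo-bin receiving item `t`,
`nbins t` is the number of pseudo-bins after items `1,…,t` have been processed, and
`bcolor t j` is the color of pseudo-bin `j` after items `1,…,t` have been processed
(the color of the last item assigned to it).  When item `t` arrives, either all existing
pseudo-bins have color `color t` and a new pseudo-bin is opened, or item `t` is assigned to an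
existing pseudo-bin whose color `g` differs from `color t` and is such that the number of
pseudo-bins of color `g` is maximal among colors different from `color t` (ties arbitrary). -/
structure BaPRun (n : ℕ) {γ : Type*} [DecidableEq γ] (color : ℕ → γ) where
  assign : ℕ → ℕ
  nbins : ℕ → ℕ
  bcolor : ℕ → ℕ → γ
  nbins_zero : nbins 0 = 0
  step : ∀ t, 1 ≤ t → t ≤ n →
    (assign t = nbins (t - 1) + 1 ∧ nbins t = nbins (t - 1) + 1 ∧
      ∀ j, 1 ≤ j → j ≤ nbins (t - 1) → bcolor (t - 1) j = color t) ∨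
    (1 ≤ assign t ∧ assign t ≤ nbins (t - 1) ∧ nbins t = nbins (t - 1) ∧
      bcolor (t - 1) (assign t) ≠ color t ∧
      ∀ g, g ≠ color t →
        ((Finset.Icc 1 (nbins (t - 1))).filter fun j => bcolor (t - 1) j = g).card ≤
          ((Finset.Icc 1 (nbins (t - 1))).filter fun j =>
            bcolor (t - 1) j = bcolor (t - 1) (assign t)).card)
  bcolor_step : ∀ t, 1 ≤ t → t ≤ n → ∀ j,
    bcolor t j = if j = assign t then color t else bcolor (t - 1) j

/-- `R.Y m` is the index of the first item assigned to pseudo-bin `m`. -/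
noncomputable def BaPRun.Y {n : ℕ} {γ : Type*} [DecidableEq γ] {c : ℕ → γ}
    (R : BaPRun n c) (m : ℕ) : ℕ :=
  sInf {t | 1 ≤ t ∧ t ≤ n ∧ R.assign t = m}

/-- The number of pseudo-bins of color `g` just after items `1,…,t` have been processed. -/
def BaPRun.binsOfColor {n : ℕ} {γ : Type*} [DecidableEq γ] {c : ℕ → γ}
    (R : BaPRun n c) (t : ℕ) (g : γ) : ℕ :=
  ((Finset.Icc 1 (R.nbins t)).filter fun j => R.bcolor t j = g).card

/-- Number of further bins opened by Next Fit on the list `l` of item sizes when the current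
bin already has load `load`. -/
noncomputable def nfExtra : List ℝ → ℝ → ℕ
  | [], _ => 0
  | a :: l, load => if load + a ≤ 1 then nfExtra l (load + a) else 1 + nfExtra l a

/-- Number of bins used by Next Fit on the list `l` of item sizes. -/
noncomputable def nfBins : List ℝ → ℕ
  | [] => 0
  | a :: l => 1 + nfExtra l a

/-- The total number of (actual) bins used by the run `R` of BaP: the items of each pseudo-bin
are split into bins, in order, by Next Fit. -/
noncomputable def bapCost {n : ℕ} {γ : Type*} [DecidableEq γ] {c : ℕ → γ}
    (s : ℕ → ℝ) (R : BaPRun n c) : ℕ :=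
  ∑ j ∈ Finset.Icc 1 (R.nbins n),
    nfBins ((((Finset.Icc 1 n).filter fun t => R.assign t = j).sort (· ≤ ·)).map s)


section AuxLemmas

open Finset

/-! ### Next Fit on zero-size items -/

lemma nfExtra_zeros (l : List ℕ) (load : ℝ) (hload : load ≤ 1) :
    nfExtra (l.map fun _ => (0:ℝ)) load = 0 := by
  induction l generalizing load with
  | nil => simp [nfExtra]
  | cons a l ih =>
    simp only [List.map_cons, nfExtra, add_zero, if_pos hload]
    exact ih load hload

lemma nfBins_zeros (l : List ℕ) (hl : l ≠ []) :
    nfBins (l.map fun _ => (0:ℝ)) = 1 := by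
  cases l with
  | nil => simp at hl
  | cons a l => simp only [List.map_cons, nfBins, nfExtra_zeros l 0 (by norm_num)]

/-! ### counting after a point update -/

lemma card_filter_point_update {γ : Type*} [DecidableEq γ] (N j0 : ℕ)
    (hj0 : j0 ∈ Finset.Icc 1 N) (h : ℕ → γ) (a g : γ) :
    ((Finset.Icc 1 N).filter fun j => (if j = j0 then a else h j) = g).card +
      (if h j0 = g then 1 else 0)
    = ((Finset.Icc 1 N).filter fun j => h j = g).card + (if a = g then 1 else 0) := by
  have hins : Finset.Icc 1 N = insert j0 ((Finset.Icc 1 N).erase j0) :=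
    (Finset.insert_erase hj0).symm
  have hnm : j0 ∉ (Finset.Icc 1 N).erase j0 := Finset.notMem_erase _ _
  have he : ((Finset.Icc 1 N).erase j0).filter (fun j => (if j = j0 then a else h j) = g)
      = ((Finset.Icc 1 N).erase j0).filter (fun j => h j = g) := by
    apply Finset.filter_congr
    intro x hx
    have : x ≠ j0 := Finset.ne_of_mem_erase hx
    simp [this]
  rw [hins, Finset.filter_insert, Finset.filter_insert]
  simp only [if_pos rfl]
  split_ifs with h1 h2 h2 <;>
    simp [Finset.card_insert_of_notMem (fun hc => hnm (Finset.mem_of_mem_filter _ hc)), he]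

/-! ### `cnt` recurrences -/

lemma cnt_succ {γ : Type*} [DecidableEq γ] (c : ℕ → γ) (i l : ℕ) (g : γ) (h : i ≤ l + 1) :
    cnt c i (l+1) g = cnt c i l g + if c (l+1) = g then 1 else 0 := by
  unfold cnt
  rw [← Finset.insert_Icc_right_eq_Icc_add_one h, Finset.filter_insert]
  by_cases hc : c (l+1) = g
  · rw [if_pos hc, if_pos hc, Finset.card_insert_of_notMem (fun hmem => by
      have := Finset.mem_Icc.mp (Finset.mem_of_mem_filter _ hmem); omega)]
  · rw [if_neg hc, if_neg hc, add_zero]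

lemma cnt_nil {γ : Type*} [DecidableEq γ] (c : ℕ → γ) (i j : ℕ) (g : γ) (h : j < i) :
    cnt c i j g = 0 := by
  unfold cnt
  rw [Finset.Icc_eq_empty (by omega)]
  simp

lemma cnt_self {γ : Type*} [DecidableEq γ] (c : ℕ → γ) (t : ℕ) :
    cnt c t t (c t) = 1 := by
  unfold cnt
  rw [Finset.Icc_self, Finset.filter_singleton, if_pos rfl, Finset.card_singleton]

/-! ### lower bound on every packing -/

lemma bin_bound {γ : Type*} [DecidableEq γ] {n L : ℕ} {s : ℕ → ℝ} {c : ℕ → γ} {f : ℕ → ℕ}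
    (hp : IsPacking n L s c f) (i j : ℕ) (hi : 1 ≤ i) (hj : j ≤ n) (b : ℕ) (g : γ) :
    2 * ((((Finset.Icc i j).filter fun l => f l = b).filter fun l => c l = g).card)
      ≤ ((Finset.Icc i j).filter fun l => f l = b).card + 1 := by
  set S := (Finset.Icc i j).filter fun l => f l = b with hS
  set G := S.filter fun l => c l = g with hG
  by_cases hGne : G.Nonempty
  · set M := G.max' hGne with hM
    have hMG : M ∈ G := G.max'_mem hGne
    have hmemS : ∀ x ∈ S, i ≤ x ∧ x ≤ j ∧ f x = b := by
      intro x hx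
      rw [hS, Finset.mem_filter, Finset.mem_Icc] at hx
      exact ⟨hx.1.1, hx.1.2, hx.2⟩
    have key : ∀ x ∈ G.erase M, ∃ y, y ∈ S ∧ x < y ∧ (∀ l ∈ S, x < l → y ≤ l) := by
      intro x hx
      have hxG : x ∈ G := Finset.mem_of_mem_erase hx
      have hxM : x ≠ M := Finset.ne_of_mem_erase hx
      have hxltM : x < M := lt_of_le_of_ne (G.le_max' x hxG) hxM
      have hMS : M ∈ S := Finset.mem_of_mem_filter _ hMG
      have hne : {y : ℕ | y ∈ S ∧ x < y}.Nonempty := ⟨M, hMS, hxltM⟩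
      refine ⟨sInf {y : ℕ | y ∈ S ∧ x < y}, ?_, ?_, ?_⟩
      · exact (Nat.sInf_mem hne).1
      · exact (Nat.sInf_mem hne).2
      · intro l hl hxl; exact Nat.sInf_le ⟨hl, hxl⟩
    choose φ hφS hφlt hφmin using key
    have hφcol : ∀ x (hx : x ∈ G.erase M), c (φ x hx) ≠ g := by
      intro x hx
      have hxG : x ∈ G := Finset.mem_of_mem_erase hx
      have hxS : x ∈ S := Finset.mem_of_mem_filter _ hxG
      obtain ⟨hxi, hxj, hxb⟩ := hmemS x hxS
      obtain ⟨hyi, hyj, hyb⟩ := hmemS _ (hφS x hx)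
      have hcx : c x = g := by
        rw [hG, Finset.mem_filter] at hxG; exact hxG.2
      have hne : c x ≠ c (φ x hx) := by
        apply hp.2.2 x (φ x hx) (le_trans hi hxi) (hφlt x hx) (le_trans hyj hj)
          (by rw [hxb, hyb])
        intro l hl1 hl2 hfl
        have hlS : l ∈ S := by
          rw [hS, Finset.mem_filter, Finset.mem_Icc]
          exact ⟨⟨le_trans hxi (le_of_lt hl1), le_trans (le_of_lt hl2) hyj⟩, by rw [hfl, hxb]⟩
        exact absurd (hφmin x hx l hlS hl1) (not_le.mpr hl2)
      rw [hcx] at hne; exact fun h => hne h.symm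
    have hcard : (G.erase M).card ≤ (S.filter fun l => ¬ c l = g).card := by
      have hmem' : ∀ x (hx : x ∈ G.erase M), φ x hx ∈ S.filter fun l => ¬ c l = g := by
        intro x hx
        rw [Finset.mem_filter]
        exact ⟨hφS x hx, hφcol x hx⟩
      classical
      refine Finset.card_le_card_of_injOn (fun x => if hx : x ∈ G.erase M then φ x hx else 0)
        (fun x hx => by have hx' : x ∈ G.erase M := hx; simp only [Finset.mem_coe, dif_pos hx']; exact hmem' x hx') ?_
      intro x1 hx1 x2 hx2 heq
      rw [Finset.mem_coe] at hx1 hx2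
      dsimp only at heq
      rw [dif_pos hx1, dif_pos hx2] at heq
      by_contra hne
      rcases lt_or_gt_of_ne hne with h | h
      · have h1 : φ x1 hx1 ≤ x2 :=
          hφmin x1 hx1 x2 (Finset.mem_of_mem_filter _ (Finset.mem_of_mem_erase hx2)) h
        have h2 : x2 < φ x2 hx2 := hφlt x2 hx2
        omega
      · have h1 : φ x2 hx2 ≤ x1 :=
          hφmin x2 hx2 x1 (Finset.mem_of_mem_filter _ (Finset.mem_of_mem_erase hx1)) h
        have h2 : x1 < φ x1 hx1 := hφlt x1 hx1
        omega
    have h1 : (G.erase M).card = G.card - 1 := by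
      rw [Finset.card_erase_of_mem hMG]
    have h2 : (S.filter fun l => ¬ c l = g).card = S.card - G.card := by
      have := Finset.card_filter_add_card_filter_not (s := S)
        (p := fun l => c l = g)
      rw [← hG] at this
      omega
    have h3 : G.card ≤ S.card := Finset.card_le_card (Finset.filter_subset _ _)
    have h4 : 1 ≤ G.card := Finset.card_pos.mpr hGne
    omega
  · rw [Finset.not_nonempty_iff_eq_empty] at hGne
    rw [hGne]; simp

lemma pack_bound {γ : Type*} [DecidableEq γ] {n L : ℕ} {c : ℕ → γ} {f : ℕ → ℕ}
    (hp : IsPacking n L (fun _ => (0:ℝ)) c f) (i j : ℕ) (g : γ)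
    (hi : 1 ≤ i) (hij : i ≤ j) (hj : j ≤ n) :
    2 * (cnt c i j g : ℤ) - ((j : ℤ) - (i : ℤ) + 1) ≤ (L : ℤ) := by
  have hmem : ∀ x ∈ Finset.Icc i j, f x ∈ Finset.Icc 1 L := by
    intro x hx
    rw [Finset.mem_Icc] at hx ⊢
    exact hp.1 x (le_trans hi hx.1) (le_trans hx.2 hj)
  have htot : (Finset.Icc i j).card =
      ∑ b ∈ Finset.Icc 1 L, ((Finset.Icc i j).filter fun l => f l = b).card :=
    Finset.card_eq_sum_card_fiberwise hmem
  have hg : cnt c i j g =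
      ∑ b ∈ Finset.Icc 1 L,
        (((Finset.Icc i j).filter fun l => f l = b).filter fun l => c l = g).card := by
    have hmem' : ∀ x ∈ (Finset.Icc i j).filter (fun l => c l = g), f x ∈ Finset.Icc 1 L :=
      fun x hx => hmem x (Finset.mem_of_mem_filter _ hx)
    rw [cnt, Finset.card_eq_sum_card_fiberwise hmem']
    apply Finset.sum_congr rfl
    intro b _
    congr 1
    rw [Finset.filter_filter, Finset.filter_filter]
    apply Finset.filter_congr
    intro x _
    exact ⟨fun h => ⟨h.2, h.1⟩, fun h => ⟨h.2, h.1⟩⟩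
  have hsum : 2 * cnt c i j g ≤ (Finset.Icc i j).card + L := by
    calc 2 * cnt c i j g
        = ∑ b ∈ Finset.Icc 1 L,
            2 * (((Finset.Icc i j).filter fun l => f l = b).filter fun l => c l = g).card := by
          rw [hg, Finset.mul_sum]
      _ ≤ ∑ b ∈ Finset.Icc 1 L,
            (((Finset.Icc i j).filter fun l => f l = b).card + 1) :=
          Finset.sum_le_sum (fun b _ => bin_bound hp i j hi hj b g)
      _ = (Finset.Icc i j).card + L := by
          rw [Finset.sum_add_distrib, ← htot, Finset.sum_const, Nat.card_Icc]
          simp [smul_eq_mul]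
  have hcard : (Finset.Icc i j).card = j + 1 - i := Nat.card_Icc i j
  have hfin : 2 * cnt c i j g ≤ (j + 1 - i) + L := by omega
  have hcast := Int.ofNat_le.mpr hfin
  push_cast at hcast
  omega

lemma opt_bound {γ : Type*} [DecidableEq γ] (n : ℕ) (c : ℕ → γ) (i j : ℕ) (g : γ)
    (hi : 1 ≤ i) (hij : i ≤ j) (hj : j ≤ n) :
    2 * (cnt c i j g : ℤ) - ((j : ℤ) - (i : ℤ) + 1)
      ≤ ((OPTcost n (fun _ => (0:ℝ)) c : ℕ) : ℤ) := by
  have hne : {L : ℕ | ∃ f, IsPacking n L (fun _ => (0:ℝ)) c f}.Nonempty := by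
    refine ⟨n, fun t => t, ?_, ?_, ?_⟩
    · exact fun t h1 h2 => ⟨h1, h2⟩
    · intro b; simp
    · intro a b _ hab _ hfab _
      have hab' : a = b := hfab
      exact absurd hab' (by omega)
  obtain ⟨f, hf⟩ := Nat.sInf_mem hne
  exact pack_bound hf i j g hi hij hj

/-! ### facts about runs of BaP -/

variable {γ : Type*} [DecidableEq γ] {n : ℕ} {c : ℕ → γ} (R : BaPRun n c)

lemma nbins_le_succ (t : ℕ) (h1 : 1 ≤ t) (h2 : t ≤ n) :
    R.nbins (t-1) ≤ R.nbins t ∧ R.nbins t ≤ R.nbins (t-1) + 1 := by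
  rcases R.step t h1 h2 with ⟨_, h, _⟩ | ⟨_, _, h, _⟩ <;> omega

lemma nbins_mono : ∀ a b : ℕ, a ≤ b → b ≤ n → R.nbins a ≤ R.nbins b := by
  intro a b hab hbn
  induction b with
  | zero =>
    have : a = 0 := by omega
    rw [this]
  | succ m ih =>
    rcases Nat.eq_or_lt_of_le hab with h | h
    · rw [h]
    · have h1 := (nbins_le_succ R (m+1) (by omega) hbn).1
      simp only [Nat.add_sub_cancel] at h1
      exact le_trans (ih (by omega) (by omega)) h1

/-- For every `1 ≤ j ≤ nbins n` there is a step opening pseudo-bin `j`. -/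
lemma open_exists (j : ℕ) (hj1 : 1 ≤ j) (hj2 : j ≤ R.nbins n) :
    ∃ t, 1 ≤ t ∧ t ≤ n ∧ R.assign t = j ∧ R.nbins (t-1) = j - 1 ∧ R.nbins t = j ∧
      ∀ b, 1 ≤ b → b ≤ j - 1 → R.bcolor (t-1) b = c t := by
  have hne : {t : ℕ | t ≤ n ∧ j ≤ R.nbins t}.Nonempty := ⟨n, le_refl n, hj2⟩
  set t := sInf {t : ℕ | t ≤ n ∧ j ≤ R.nbins t} with ht
  obtain ⟨htn, htj⟩ : t ≤ n ∧ j ≤ R.nbins t := Nat.sInf_mem hne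
  have ht1 : 1 ≤ t := by
    by_contra h
    have : t = 0 := by omega
    rw [this, R.nbins_zero] at htj
    omega
  have hprev : ¬ (t - 1 ≤ n ∧ j ≤ R.nbins (t-1)) := fun hc => by
    have h2 := Nat.sInf_le (show t - 1 ∈ {t : ℕ | t ≤ n ∧ j ≤ R.nbins t} from hc)
    omega
  have hprev' : R.nbins (t-1) < j := by
    rcases Nat.lt_or_ge (R.nbins (t-1)) j with h | h
    · exact h
    · exact absurd ⟨by omega, h⟩ hprev
  rcases R.step t ht1 htn with ⟨ha, hb, hc⟩ | ⟨_, _, hb, _⟩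
  · refine ⟨t, ht1, htn, by omega, by omega, by omega, ?_⟩
    intro b hb1 hb2
    exact hc b hb1 (by omega)
  · omega

lemma nbins_pos (hn : 1 ≤ n) : 1 ≤ R.nbins n := by
  have h1 : R.nbins 1 = 1 := by
    rcases R.step 1 le_rfl hn with ⟨_, hb, _⟩ | ⟨ha1, ha2, _, _⟩
    · simp only [Nat.sub_self] at hb; rw [hb, R.nbins_zero]
    · simp only [Nat.sub_self] at ha2; rw [R.nbins_zero] at ha2; omega
  have := nbins_mono R 1 n hn le_rfl
  omega

/-- `Dfun R g t = 2·(#bins of color g) − (#bins)` after step `t`. -/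
def Dfun (g : γ) (t : ℕ) : ℤ := 2 * (R.binsOfColor t g : ℤ) - (R.nbins t : ℤ)

lemma Dfun_zero (g : γ) : Dfun R g 0 = 0 := by
  simp [Dfun, BaPRun.binsOfColor, R.nbins_zero]

lemma boc_open (t : ℕ) (h1 : 1 ≤ t) (h2 : t ≤ n)
    (ha : R.assign t = R.nbins (t-1) + 1) (hb : R.nbins t = R.nbins (t-1) + 1) (g : γ) :
    R.binsOfColor t g = R.binsOfColor (t-1) g + (if c t = g then 1 else 0) := by
  unfold BaPRun.binsOfColor
  rw [hb, ← Finset.insert_Icc_right_eq_Icc_add_one (by omega)]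
  rw [Finset.filter_insert]
  have hcolnew : R.bcolor t (R.nbins (t-1) + 1) = c t := by
    rw [R.bcolor_step t h1 h2, if_pos (by omega)]
  have hfe : (Finset.Icc 1 (R.nbins (t-1))).filter (fun j => R.bcolor t j = g)
      = (Finset.Icc 1 (R.nbins (t-1))).filter (fun j => R.bcolor (t-1) j = g) := by
    apply Finset.filter_congr
    intro x hx
    rw [Finset.mem_Icc] at hx
    rw [R.bcolor_step t h1 h2, if_neg (by omega)]
  rw [hfe]
  by_cases hct : c t = g
  · rw [if_pos (by rw [hcolnew, hct]), Finset.card_insert_of_notMem (fun hc => by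
      have := Finset.mem_Icc.mp (Finset.mem_of_mem_filter _ hc); omega), if_pos hct]
  · rw [if_neg (by rw [hcolnew]; exact hct), if_neg hct, add_zero]

lemma boc_existing (t : ℕ) (h1 : 1 ≤ t) (h2 : t ≤ n)
    (ha1 : 1 ≤ R.assign t) (ha2 : R.assign t ≤ R.nbins (t-1)) (hb : R.nbins t = R.nbins (t-1))
    (g : γ) :
    R.binsOfColor t g + (if R.bcolor (t-1) (R.assign t) = g then 1 else 0)
      = R.binsOfColor (t-1) g + (if c t = g then 1 else 0) := by
  unfold BaPRun.binsOfColor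
  rw [hb]
  have hfe : (Finset.Icc 1 (R.nbins (t-1))).filter (fun j => R.bcolor t j = g)
      = (Finset.Icc 1 (R.nbins (t-1))).filter
          (fun j => (if j = R.assign t then c t else R.bcolor (t-1) j) = g) := by
    apply Finset.filter_congr
    intro x _
    rw [R.bcolor_step t h1 h2]
  rw [hfe]
  exact card_filter_point_update _ _ (Finset.mem_Icc.mpr ⟨ha1, ha2⟩) _ _ _

lemma D_facts (t : ℕ) (h1 : 1 ≤ t) (h2 : t ≤ n) (g : γ) :
    Dfun R g t ≤ Dfun R g (t-1) + 2 ∧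
    (c t ≠ g → Dfun R g t ≤ Dfun R g (t-1)) ∧
    (c t ≠ g → 1 ≤ Dfun R g (t-1) → Dfun R g t ≤ Dfun R g (t-1) - 2) := by
  rcases R.step t h1 h2 with ⟨ha, hb, hall⟩ | ⟨ha1, ha2, hb, hgstar, hmax⟩
  · have hrec := boc_open R t h1 h2 ha hb g
    refine ⟨?_, ?_, ?_⟩
    · simp only [Dfun]; split_ifs at hrec <;> omega
    · intro hne
      rw [if_neg (fun h => hne h)] at hrec
      simp only [Dfun]; omega
    · intro hne hD
      exfalso
      have hpos : 1 ≤ R.binsOfColor (t-1) g := by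
        simp only [Dfun] at hD
        have := Nat.cast_nonneg (α := ℤ) (R.nbins (t-1))
        omega
      have hpos' : 0 < ((Finset.Icc 1 (R.nbins (t-1))).filter
          fun j => R.bcolor (t-1) j = g).card := hpos
      obtain ⟨j, hj⟩ := Finset.card_pos.mp hpos'
      have hj1 := Finset.mem_of_mem_filter _ hj
      rw [Finset.mem_Icc] at hj1
      have hj2 : R.bcolor (t-1) j = g := (Finset.mem_filter.mp hj).2
      have := hall j hj1.1 hj1.2
      rw [hj2] at this
      exact hne this.symm
  · have hrec := boc_existing R t h1 h2 ha1 ha2 hb g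
    refine ⟨?_, ?_, ?_⟩
    · simp only [Dfun]
      rw [hb]
      split_ifs at hrec <;> omega
    · intro hne
      rw [if_neg (fun h => hne h)] at hrec
      simp only [Dfun]
      rw [hb]
      split_ifs at hrec <;> omega
    · intro hne hD
      have hgg : R.bcolor (t-1) (R.assign t) = g := by
        by_contra hgs
        have hle := hmax g (fun h => hne h.symm)
        have hdisj : R.binsOfColor (t-1) g +
            ((Finset.Icc 1 (R.nbins (t-1))).filter
              (fun j => R.bcolor (t-1) j = R.bcolor (t-1) (R.assign t))).card
            ≤ R.nbins (t-1) := by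
          have hsub : ((Finset.Icc 1 (R.nbins (t-1))).filter
              (fun j => R.bcolor (t-1) j = R.bcolor (t-1) (R.assign t)))
              ⊆ (Finset.Icc 1 (R.nbins (t-1))).filter
                (fun j => ¬ R.bcolor (t-1) j = g) := by
            intro x hx
            rw [Finset.mem_filter] at hx ⊢
            exact ⟨hx.1, fun h => hgs (hx.2 ▸ h ▸ hx.2.symm ▸ rfl)⟩
          have hc1 := Finset.card_le_card hsub
          have hc2 := Finset.card_filter_add_card_filter_not
            (s := Finset.Icc 1 (R.nbins (t-1))) (p := fun j => R.bcolor (t-1) j = g)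
          rw [Nat.card_Icc, Nat.add_sub_cancel] at hc2
          unfold BaPRun.binsOfColor
          omega
        simp only [Dfun] at hD
        have hbocg : R.binsOfColor (t-1) g = ((Finset.Icc 1 (R.nbins (t-1))).filter
            fun j => R.bcolor (t-1) j = g).card := rfl
        omega
      rw [if_pos hgg, if_neg (fun h => hne h)] at hrec
      simp only [Dfun]
      rw [hb]
      omega

end AuxLemmas

/-- on every (nonempty) instance whose items all have size `0`, every run of BaP
uses exactly `k` bins, where `k` is the final number of pseudo-bins, and
`k ≤ 2·LB_1 − 1 < 2·OPT` (the first inequality says some `i, j, g` realize it, the second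
holds for all `i, j, g` since `LB_1` is the maximum): the absolute competitive ratio of BaP on
zero-size items is at most `2`. -/
theorem bap_zero_size_lt_two_OPT {γ : Type*} [DecidableEq γ] (n : ℕ) (hn : 1 ≤ n)
    (c : ℕ → γ) (R : BaPRun n c) :
    bapCost (fun _ => (0 : ℝ)) R = R.nbins n ∧
    (∃ i j : ℕ, ∃ g : γ, 1 ≤ i ∧ i ≤ j ∧ j ≤ n ∧
      (R.nbins n : ℤ) ≤ 2 * (2 * (cnt c i j g : ℤ) - ((j : ℤ) - (i : ℤ) + 1)) - 1) ∧
    (∀ i j : ℕ, ∀ g : γ, 1 ≤ i → i ≤ j → j ≤ n →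
      2 * (2 * (cnt c i j g : ℤ) - ((j : ℤ) - (i : ℤ) + 1)) - 1 <
        2 * (OPTcost n (fun _ => (0 : ℝ)) c : ℤ)) := by
  constructor
  · -- bapCost = nbins n
    unfold bapCost
    have hterm : ∀ j ∈ Finset.Icc 1 (R.nbins n),
        nfBins ((((Finset.Icc 1 n).filter fun t => R.assign t = j).sort (· ≤ ·)).map
          fun _ => (0:ℝ)) = 1 := by
      intro j hj
      rw [Finset.mem_Icc] at hj
      obtain ⟨t, ht1, htn, hta, _, _, _⟩ := open_exists R j hj.1 hj.2
      apply nfBins_zeros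
      have htmem : t ∈ (Finset.Icc 1 n).filter fun t => R.assign t = j := by
        rw [Finset.mem_filter, Finset.mem_Icc]
        exact ⟨⟨ht1, htn⟩, hta⟩
      have hlen : (((Finset.Icc 1 n).filter fun t => R.assign t = j).sort (· ≤ ·)).length
          = ((Finset.Icc 1 n).filter fun t => R.assign t = j).card :=
        Finset.length_sort _
      have hcpos : 0 < ((Finset.Icc 1 n).filter fun t => R.assign t = j).card :=
        Finset.card_pos.mpr ⟨t, htmem⟩
      intro hnil
      rw [hnil] at hlen
      simp at hlen
      omega
    rw [Finset.sum_congr rfl hterm, Finset.sum_const, Nat.card_Icc, smul_eq_mul, mul_one]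
    omega
  constructor
  · -- existence of the witnessing interval
    set k := R.nbins n with hk
    have hk1 : 1 ≤ k := nbins_pos R hn
    obtain ⟨t, ht1, htn, hta, htprev, htk, htall⟩ := open_exists R k hk1 le_rfl
    by_cases hk2 : 2 ≤ k
    · -- main case
      set g := c t with hg
      have hboc : R.binsOfColor (t-1) g = k - 1 := by
        unfold BaPRun.binsOfColor
        rw [htprev, Finset.filter_true_of_mem (fun b hb => by
          rw [Finset.mem_Icc] at hb
          exact htall b hb.1 hb.2), Nat.card_Icc, Nat.add_sub_cancel]
      have hDt : Dfun R g (t-1) = (k : ℤ) - 1 := by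
        simp only [Dfun, hboc, htprev]
        omega
      have hSne : (0 : ℕ) ∈ {l : ℕ | l ≤ t-1 ∧ Dfun R g l ≤ 0} := by
        constructor
        · omega
        · rw [Dfun_zero]
      have hbdd : BddAbove {l : ℕ | l ≤ t-1 ∧ Dfun R g l ≤ 0} := ⟨t-1, fun x hx => hx.1⟩
      set m := sSup {l : ℕ | l ≤ t-1 ∧ Dfun R g l ≤ 0} with hm
      obtain ⟨hmle, hmD⟩ : m ≤ t-1 ∧ Dfun R g m ≤ 0 := Nat.sSup_mem ⟨0, hSne⟩ hbdd
      have hmlt : m < t - 1 := by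
        rcases Nat.lt_or_ge m (t-1) with h | h
        · exact h
        · have : m = t - 1 := by omega
          rw [this] at hmD
          omega
      have hDpos : ∀ l, m < l → l ≤ t-1 → 1 ≤ Dfun R g l := by
        intro l hml hlt
        by_contra h
        have hlS : l ∈ {l : ℕ | l ≤ t-1 ∧ Dfun R g l ≤ 0} := ⟨hlt, by omega⟩
        have := le_csSup hbdd hlS
        omega
      have claim : ∀ d : ℕ, m + d ≤ t - 1 →
          Dfun R g (m + d) ≤ 4 * (cnt c (m+1) (m+d) g : ℤ) - 2 * d := by
        intro d
        induction d with
        | zero =>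
          intro _
          rw [cnt_nil c (m+1) (m+0) g (by omega)]
          simpa using hmD
        | succ e ih =>
          intro hle
          have ihh := ih (by omega)
          have hstep := D_facts R (m+e+1) (by omega) (by omega)  g
          simp only [Nat.add_sub_cancel] at hstep
          have hcnt : cnt c (m+1) (m+e+1) g
              = cnt c (m+1) (m+e) g + if c (m+e+1) = g then 1 else 0 :=
            cnt_succ c (m+1) (m+e) g (by omega)
          by_cases hcol : c (m+e+1) = g
          · rw [if_pos hcol] at hcnt
            have := hstep.1
            have h4 : (m : ℤ) + e + 1 = (m + e + 1 : ℕ) := by push_cast; ring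
            rw [show m + (e+1) = m + e + 1 from by omega, hcnt]
            push_cast
            rw [show m + (e+1) = m + e + 1 from by omega] at *
            omega
          · rcases Nat.eq_zero_or_pos e with he0 | hepos
            · exfalso
              subst he0
              have h1 := hstep.2.1 hcol
              simp only [Nat.add_zero] at h1 ihh ⊢
              have h2 := hDpos (m+1) (by omega) (by omega)
              omega
            · have h1 := hstep.2.2 hcol (hDpos (m+e) (by omega) (by omega))
              rw [if_neg hcol, add_zero] at hcnt
              rw [show m + (e+1) = m + e + 1 from by omega, hcnt]
              push_cast
              rw [show m + (e+1) = m + e + 1 from by omega] at *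
              omega
      have hfin := claim (t-1-m) (by omega)
      rw [show m + (t-1-m) = t-1 from by omega] at hfin
      rw [hDt] at hfin
      have hcnt2 : cnt c (m+1) t g = cnt c (m+1) (t-1) g + 1 := by
        have := cnt_succ c (m+1) (t-1) g (by omega)
        rw [show t-1+1 = t from by omega] at this
        rw [this, if_pos rfl]
      refine ⟨m+1, t, g, by omega, by omega, htn, ?_⟩
      rw [hcnt2]
      push_cast
      omega
    · -- k = 1
      refine ⟨t, t, c t, by omega, le_rfl, htn, ?_⟩
      rw [cnt_self]
      push_cast
      omega
  · -- lower bound on OPT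
    intro i j g hi hij hj
    have h := opt_bound n c i j g hi hij hj
    omega
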